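/- Let G be a group obtained from a group π by adjoining generators z_1,...,z_n and relations z_i^e = w_i(z_1,...,z_n) coming from an R-nullhomologous system over π (i.e., G = (π * F⟨z_1,...,z_n⟩)/⟨⟨z_i^e w_i(z)^{-1}⟩⟩). Then the canonical homomorphism π → G induces an isomorphism on H_1(-;R) and a surjection on H_2(-;R). -/

import Mathlib

open scoped TensorProduct
open scoped commutatorElement

/-- The set of denominators of (reduced fractional expressions of) elements of `R ⊆ ℚ`. -/
def DR (R : Subring ℚ) : Set ℕ := {d | ∃ q ∈ R, q.den = d}

variable {G H A : Type*} [Group G] [Group H] [Group A]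

/-- Evaluation of a monomial over `G` in `n` indeterminates at a tuple of elements of `G`. -/
noncomputable def evalWord {n : ℕ} (g : Fin n → G) :
    Monoid.Coprod G (FreeGroup (Fin n)) →* G :=
  Monoid.Coprod.lift (MonoidHom.id G) (FreeGroup.lift g)

/-- The projection `G * F → F → F/[F,F]`. -/
noncomputable def toFreeAb (G : Type*) [Group G] (n : ℕ) :
    Monoid.Coprod G (FreeGroup (Fin n)) →* Abelianization (FreeGroup (Fin n)) :=
  Monoid.Coprod.lift 1 Abelianization.of

/-- An `R`-nullhomologous system of equations `xᵢ^e = wᵢ(x₁,…,xₙ)` over `G`. -/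
structure NullSys (R : Subring ℚ) (G : Type*) [Group G] where
  n : ℕ
  e : ℕ
  he : e ∈ DR R
  w : Fin n → Monoid.Coprod G (FreeGroup (Fin n))
  nullh : ∀ i, toFreeAb G n (w i) = 1

/-- A solution of a system of equations over `G`. -/
def NullSys.IsSolution {R : Subring ℚ} (S : NullSys R G) (g : Fin S.n → G) : Prop :=
  ∀ i, (g i) ^ S.e = evalWord g (S.w i)

/-- A group is `R`-closed if every `R`-nullhomologous system over it has a unique solution. -/
def IsRClosed (R : Subring ℚ) (A : Type*) [Group A] : Prop :=
  ∀ S : NullSys R A, ∃! g : Fin S.n → A, S.IsSolution g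

/-- A normal subgroup `N ≤ G` is `R`-invisible if it is normally finitely generated and every
element of `N/[G,N]` has (finite) order lying in `D_R`. -/
def IsRInvisible (R : Subring ℚ) {G : Type*} [Group G] (N : Subgroup G) : Prop :=
  N.Normal ∧
  (∃ s : Finset G, ↑s ⊆ (N : Set G) ∧ Subgroup.normalClosure ↑s = N) ∧
  ∀ x ∈ N, ∃ e ∈ DR R, x ^ e ∈ ⁅(⊤ : Subgroup G), N⁆
/-- `H₁(G;R) = H₁(G;ℤ) ⊗ R`, via the abelianization. -/
abbrev H1R (R : Subring ℚ) (G : Type*) [Group G] : Type _ :=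
  Additive (Abelianization G) ⊗[ℤ] R

/-- The map induced on `H₁(-;R)` by a group homomorphism. -/
noncomputable def H1Rmap (R : Subring ℚ) {G H : Type*} [Group G] [Group H] (φ : G →* H) :
    H1R R G →ₗ[ℤ] H1R R H :=
  TensorProduct.map (MonoidHom.toAdditive (Abelianization.map φ)).toIntLinearMap LinearMap.id

section Hopf

variable (G : Type*) [Group G]

/-- The canonical free presentation of `G`. -/
noncomputable def presHom : FreeGroup G →* G := FreeGroup.lift id

/-- The relation subgroup of the canonical free presentation of `G`. -/
noncomputable def relSub : Subgroup (FreeGroup G) := (presHom G).ker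

/-- The numerator `ker π ⊓ [F,F]` of the Hopf formula for `H₂(G)`. -/
noncomputable def hopfTop : Subgroup (FreeGroup G) :=
  relSub G ⊓ ⁅(⊤ : Subgroup (FreeGroup G)), (⊤ : Subgroup (FreeGroup G))⁆

/-- The denominator `[F, ker π]` of the Hopf formula for `H₂(G)`. -/
noncomputable def hopfBot : Subgroup (FreeGroup G) :=
  ⁅(⊤ : Subgroup (FreeGroup G)), relSub G⁆

noncomputable instance relSub_normal : (relSub G).Normal := MonoidHom.normal_ker _

noncomputable instance hopfBot_normal : (hopfBot G).Normal := Subgroup.commutator_normal _ _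

noncomputable instance hopfBot_subgroupOf_normal :
    ((hopfBot G).subgroupOf (hopfTop G)).Normal := Subgroup.normal_subgroupOf

/-- `H₂(G;ℤ)` via the Hopf formula `(ker π ⊓ [F,F])/[F, ker π]` for the canonical free
presentation `π : F(G) → G`. -/
abbrev H2Z : Type _ :=
  ↥(hopfTop G) ⧸ ((hopfBot G).subgroupOf (hopfTop G))

noncomputable instance H2ZCommGroup : CommGroup (H2Z G) :=
  { (inferInstance : Group (H2Z G)) with
    mul_comm := by
      intro a b
      induction a using QuotientGroup.induction_on with
      | H x =>
      induction b using QuotientGroup.induction_on with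
      | H y =>
      rw [← QuotientGroup.mk_mul, ← QuotientGroup.mk_mul, QuotientGroup.eq]
      rw [Subgroup.mem_subgroupOf]
      have : (((x * y)⁻¹ * (y * x) : ↥(hopfTop G)) : FreeGroup G)
          = ⁅((y : FreeGroup G))⁻¹, ((x : FreeGroup G))⁻¹⁆ := by
        simp [commutatorElement_def, mul_assoc]
      rw [this]
      exact Subgroup.commutator_mem_commutator (Subgroup.mem_top _)
        ((relSub G).inv_mem (Subgroup.mem_inf.mp x.2).1) }

variable {G} {H : Type*} [Group H]

theorem presHom_naturality (φ : G →* H) (x : FreeGroup G) :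
    presHom H (FreeGroup.map φ x) = φ (presHom G x) := by
  have : (presHom H).comp (FreeGroup.map φ) = φ.comp (presHom G) := by
    apply FreeGroup.ext_hom
    intro a
    simp [presHom]
  exact DFunLike.congr_fun this x

theorem map_mem_hopfTop (φ : G →* H) {x : FreeGroup G} (hx : x ∈ hopfTop G) :
    FreeGroup.map φ x ∈ hopfTop H := by
  rcases Subgroup.mem_inf.mp hx with ⟨h1, h2⟩
  refine Subgroup.mem_inf.mpr ⟨?_, ?_⟩
  · simp only [relSub, MonoidHom.mem_ker] at h1 ⊢
    rw [presHom_naturality, h1, map_one]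
  · have := Subgroup.mem_map_of_mem (FreeGroup.map φ) h2
    rw [Subgroup.map_commutator] at this
    exact Subgroup.commutator_mono le_top le_top this

theorem map_mem_hopfBot (φ : G →* H) {x : FreeGroup G} (hx : x ∈ hopfBot G) :
    FreeGroup.map φ x ∈ hopfBot H := by
  have := Subgroup.mem_map_of_mem (FreeGroup.map φ) hx
  rw [hopfBot, Subgroup.map_commutator] at this
  refine Subgroup.commutator_mono le_top ?_ this
  rintro y ⟨z, hz, rfl⟩
  simp only [relSub, MonoidHom.mem_ker] at hz ⊢
  rw [presHom_naturality, hz, map_one]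

/-- The map induced on `H₂(-;ℤ)` (Hopf formula) by a group homomorphism. -/
noncomputable def H2Zmap (φ : G →* H) : H2Z G →* H2Z H :=
  QuotientGroup.map _ _
    (MonoidHom.codRestrict ((FreeGroup.map φ).domRestrict (hopfTop G)) (hopfTop H)
      fun x => map_mem_hopfTop φ x.2)
    (by
      intro x hx
      rw [Subgroup.mem_subgroupOf] at hx
      rw [Subgroup.mem_comap, Subgroup.mem_subgroupOf]
      exact map_mem_hopfBot φ hx)

/-- The map induced on `H₂(-;R) = H₂(-;ℤ) ⊗ R` by a group homomorphism. -/
noncomputable def H2Rmap (R : Subring ℚ) (φ : G →* H) :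
    (Additive (H2Z G) ⊗[ℤ] R) →ₗ[ℤ] (Additive (H2Z H) ⊗[ℤ] R) :=
  TensorProduct.map (MonoidHom.toAdditive (H2Zmap φ)).toIntLinearMap LinearMap.id

end Hopf

/-- A homomorphism is 2-connected on `R`-homology if it induces an isomorphism on `H₁(-;R)`
and a surjection on `H₂(-;R)`. -/
def TwoConnected (R : Subring ℚ) {G H : Type*} [Group G] [Group H] (φ : G →* H) : Prop :=
  Function.Bijective (H1Rmap R φ) ∧ Function.Surjective (H2Rmap R φ)

/-- A group is finitely presented if it is presented by finitely many generators and
relations. -/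
def FinitelyPresentedGroup (G : Type*) [Group G] : Prop :=
  ∃ (n : ℕ) (rels : Finset (FreeGroup (Fin n))),
    Nonempty (G ≃* PresentedGroup (rels : Set (FreeGroup (Fin n))))

/-- The class `Ω^R`: homomorphisms of finitely generated groups into finitely presented groups
which are 2-connected on `R`-homology. -/
def MemOmega (R : Subring ℚ) {P G : Type*} [Group P] [Group G] (α : P →* G) : Prop :=
  Group.FG P ∧ FinitelyPresentedGroup G ∧ TwoConnected R α

/-! ### Auxiliary general lemmas -/

section AuxGeneral

open Subgroup

lemma one_div_mem_of_mem_DR (R : Subring ℚ) {e : ℕ} (he : e ∈ DR R) : (1 / (e : ℚ)) ∈ R := by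
  obtain ⟨q, hq, rfl⟩ := he
  have h : IsCoprime (q.num : ℤ) (q.den : ℤ) := by
    rw [Int.isCoprime_iff_gcd_eq_one]; exact q.reduced
  obtain ⟨a, b, hab⟩ := h
  have hd : (q.den : ℚ) ≠ 0 := by exact_mod_cast q.den_nz
  have hnum : (q.num : ℚ) = q * q.den := by
    rw [eq_comm, mul_comm]; exact_mod_cast Rat.den_mul_eq_num q
  have key : (1 / (q.den : ℚ)) = (a : ℚ) * q + b := by
    have h2 : ((a * q.num + b * q.den : ℤ) : ℚ) = 1 := by rw [hab]; norm_num
    push_cast at h2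
    rw [hnum] at h2
    field_simp
    linear_combination -h2
  rw [key]
  exact R.add_mem (R.mul_mem (intCast_mem R a) hq) (intCast_mem R b)

lemma pos_of_mem_DR (R : Subring ℚ) {e : ℕ} (he : e ∈ DR R) : 0 < e := by
  obtain ⟨q, _, rfl⟩ := he; exact q.pos

/-- A subgroup contained in the centre is normal. -/
lemma normal_of_le_center' {F : Type*} [Group F] (H : Subgroup F)
    (h : H ≤ Subgroup.center F) : H.Normal := by
  constructor
  intro x hx g
  have hc := Subgroup.mem_center_iff.mp (h hx) g
  have : g * x * g⁻¹ = x := by rw [hc]; group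
  rwa [this]

/-- The image of a normal subgroup `K` is central in `F ⧸ ⁅⊤, K⁆`. -/
lemma quot_comm_central {F : Type*} [Group F] (K : Subgroup F) [K.Normal] {k : F}
    (hk : k ∈ K) :
    (QuotientGroup.mk k : F ⧸ ⁅(⊤ : Subgroup F), K⁆) ∈ Subgroup.center _ := by
  rw [Subgroup.mem_center_iff]
  intro g
  induction g using QuotientGroup.induction_on with
  | H g =>
    rw [← QuotientGroup.mk_mul, ← QuotientGroup.mk_mul, QuotientGroup.eq]
    have : (g * k)⁻¹ * (k * g) = ⁅k⁻¹, g⁻¹⁆ := by group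
    rw [this]
    rw [show ⁅(⊤ : Subgroup F), K⁆ = ⁅K, (⊤ : Subgroup F)⁆ from Subgroup.commutator_comm _ _]
    exact Subgroup.commutator_mem_commutator (K.inv_mem hk) (Subgroup.mem_top _)

/-- Elements of the normal closure of `S` become, modulo `⁅⊤, normalClosure S⁆`, elements of
the plain subgroup closure of the image of `S`. -/
lemma mk_mem_closure_image {F : Type*} [Group F] (S : Set F) {x : F}
    (hx : x ∈ Subgroup.normalClosure S) :
    (QuotientGroup.mk x : F ⧸ ⁅(⊤ : Subgroup F), Subgroup.normalClosure S⁆) ∈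
      Subgroup.closure (QuotientGroup.mk '' S) := by
  set D := ⁅(⊤ : Subgroup F), Subgroup.normalClosure S⁆
  have hsurj : Function.Surjective (QuotientGroup.mk' D) := QuotientGroup.mk'_surjective D
  have h1 : (QuotientGroup.mk x : F ⧸ D) ∈
      (Subgroup.normalClosure S).map (QuotientGroup.mk' D) :=
    Subgroup.mem_map_of_mem _ hx
  rw [Subgroup.map_normalClosure _ _ hsurj] at h1
  have himg : (QuotientGroup.mk' D) '' S ⊆ ↑(Subgroup.center (F ⧸ D)) := by
    rintro _ ⟨s, hs, rfl⟩
    exact quot_comm_central _ (Subgroup.subset_normalClosure hs)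
  have hnormal : (Subgroup.closure ((QuotientGroup.mk' D) '' S)).Normal :=
    normal_of_le_center' _ ((Subgroup.closure_le _).mpr himg)
  have hle : Subgroup.normalClosure ((QuotientGroup.mk' D) '' S) ≤
      Subgroup.closure ((QuotientGroup.mk' D) '' S) :=
    Subgroup.normalClosure_le_normal Subgroup.subset_closure
  exact hle h1

/-- The "Hopf lemma": two homomorphisms into `F` which agree after composing with
`π : F →* G'` agree, on the commutator subgroup, modulo `⁅⊤, ker π⁆`. -/
lemma hopf_congr {A F G' : Type*} [Group A] [Group F] [Group G'] (π : F →* G')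
    (α β : A →* F) (h : π.comp α = π.comp β) {y : A}
    (hy : y ∈ ⁅(⊤ : Subgroup A), (⊤ : Subgroup A)⁆) :
    α y * (β y)⁻¹ ∈ ⁅(⊤ : Subgroup F), π.ker⁆ := by
  set D := ⁅(⊤ : Subgroup F), π.ker⁆ with hD
  have hker : ∀ x : A, α x * (β x)⁻¹ ∈ π.ker := by
    intro x
    rw [MonoidHom.mem_ker, map_mul, map_inv]
    have hx := DFunLike.congr_fun h x
    simp only [MonoidHom.comp_apply] at hx
    rw [hx, mul_inv_cancel]
  have hcent : ∀ x : A,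
      (QuotientGroup.mk (α x * (β x)⁻¹) : F ⧸ D) ∈ Subgroup.center _ :=
    fun x => quot_comm_central _ (hker x)
  let c : A →* F ⧸ D :=
    { toFun := fun x => QuotientGroup.mk (α x * (β x)⁻¹)
      map_one' := by simp
      map_mul' := by
        intro x y
        have hz := Subgroup.mem_center_iff.mp (hcent y)
          ((QuotientGroup.mk (β x) : F ⧸ D))⁻¹
        have e1 : (QuotientGroup.mk (α (x * y) * (β (x * y))⁻¹) : F ⧸ D)
            = QuotientGroup.mk (α x) * QuotientGroup.mk (α y * (β y)⁻¹)
              * (QuotientGroup.mk (β x))⁻¹ := by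
          rw [map_mul α, map_mul β, ← QuotientGroup.mk_inv, ← QuotientGroup.mk_mul,
            ← QuotientGroup.mk_mul]
          congr 1
          group
        have e2 : (QuotientGroup.mk (α x) : F ⧸ D) * QuotientGroup.mk (α y * (β y)⁻¹)
              * (QuotientGroup.mk (β x))⁻¹
            = QuotientGroup.mk (α x) * (QuotientGroup.mk (β x))⁻¹
              * QuotientGroup.mk (α y * (β y)⁻¹) := by
          rw [mul_assoc, ← hz, ← mul_assoc]
        have e3 : (QuotientGroup.mk (α x) : F ⧸ D) * (QuotientGroup.mk (β x))⁻¹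
            = QuotientGroup.mk (α x * (β x)⁻¹) := by
          rw [← QuotientGroup.mk_inv, ← QuotientGroup.mk_mul]
        simp only [e1, e2, e3] }
  have hcomm : ⁅(⊤ : Subgroup A), (⊤ : Subgroup A)⁆ ≤ c.ker := by
    rw [Subgroup.commutator_le]
    intro g₁ _ g₂ _
    rw [MonoidHom.mem_ker, map_commutatorElement, commutatorElement_eq_one_iff_commute]
    exact (Subgroup.mem_center_iff.mp (hcent g₁) (c g₂)).symm
  have hy1 : c y = 1 := hcomm hy
  have : (QuotientGroup.mk (α y * (β y)⁻¹) : F ⧸ D) = 1 := hy1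
  rwa [QuotientGroup.eq_one_iff] at this

end AuxGeneral
/-! ### Coprod factoring lemmas -/

section CoprodFactor

open Monoid

variable {P : Type*} [Group P] {n : ℕ} {M' : Type*} [CommGroup M']

/-- A lift into a commutative group is the pointwise product of the two one-sided lifts. -/
lemma coprod_lift_mul (f : P →* M') (g : FreeGroup (Fin n) →* M') :
    Coprod.lift f g = Coprod.lift f 1 * Coprod.lift 1 g := by
  apply Coprod.hom_ext
  · rw [Coprod.lift_comp_inl, MonoidHom.mul_comp, Coprod.lift_comp_inl, Coprod.lift_comp_inl,
      mul_one]
  · rw [Coprod.lift_comp_inr, MonoidHom.mul_comp, Coprod.lift_comp_inr, Coprod.lift_comp_inr,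
      one_mul]

/-- The right one-sided lift factors through `toFreeAb`. -/
lemma coprod_lift_one_left (g : FreeGroup (Fin n) →* M') :
    (Abelianization.lift g).comp (toFreeAb P n) = Coprod.lift 1 g := by
  apply Coprod.hom_ext
  · ext p
    simp [toFreeAb]
  · ext i
    simp [toFreeAb]

/-- The left one-sided lift factors through the projection onto `Abelianization P`. -/
lemma coprod_lift_one_right (f : P →* M') :
    (Abelianization.lift f).comp
      (Coprod.lift (Abelianization.of : P →* Abelianization P) 1 :
        Coprod P (FreeGroup (Fin n)) →* Abelianization P) = Coprod.lift f 1 := by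
  apply Coprod.hom_ext
  · ext p
    simp
  · ext i
    simp

end CoprodFactor
/-! ### The setup for adjoining solutions -/

namespace AdjSol

open Monoid Subgroup

variable (R : Subring ℚ) (P : Type*) [Group P] (S : NullSys R P)

/-- The relator words `zᵢ^e * wᵢ⁻¹`. -/
def rel : Fin S.n → Coprod P (FreeGroup (Fin S.n)) := fun i =>
  (Coprod.inr (FreeGroup.of i) : Coprod P (FreeGroup (Fin S.n))) ^ S.e * (S.w i)⁻¹

/-- The normal closure of the relators. -/
def NN : Subgroup (Coprod P (FreeGroup (Fin S.n))) :=
  Subgroup.normalClosure (Set.range (rel R P S))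

instance NN_normal : (NN R P S).Normal := Subgroup.normalClosure_normal

/-- The quotient group. -/
abbrev GG := Coprod P (FreeGroup (Fin S.n)) ⧸ NN R P S

/-- The quotient projection. -/
def mkN : Coprod P (FreeGroup (Fin S.n)) →* GG R P S := QuotientGroup.mk' (NN R P S)

/-- The canonical map `P → G`. -/
def φS : P →* GG R P S := (mkN R P S).comp Coprod.inl

/-- The exponent-sum character of the free group. -/
def ell {n : ℕ} (i : Fin n) : FreeGroup (Fin n) →* Multiplicative ℤ :=
  FreeGroup.lift (fun j => if j = i then Multiplicative.ofAdd (1 : ℤ) else 1)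

/-- The `i`-th exponent-sum character of the coproduct. -/
def chi (i : Fin S.n) : Coprod P (FreeGroup (Fin S.n)) →* Multiplicative ℤ :=
  Coprod.lift 1 (ell i)

lemma chi_w (i j : Fin S.n) : chi R P S i (S.w j) = 1 := by
  have h : chi R P S i = (Abelianization.lift (ell i)).comp (toFreeAb P S.n) :=
    (coprod_lift_one_left (ell i)).symm
  rw [h, MonoidHom.comp_apply, S.nullh j, map_one]

lemma chi_rel (i j : Fin S.n) :
    chi R P S i (rel R P S j) = Multiplicative.ofAdd (if j = i then (S.e : ℤ) else 0) := by
  rw [rel, map_mul, map_inv, chi_w, inv_one, mul_one, map_pow, chi,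
    Coprod.lift_apply_inr, ell, FreeGroup.lift_apply_of]
  by_cases hj : j = i
  · rw [if_pos hj, if_pos hj]
    rw [← ofAdd_nsmul]
    norm_num
  · rw [if_neg hj, if_neg hj, one_pow, ofAdd_zero]

lemma comm_le_ker_chi (i : Fin S.n) :
    ⁅(⊤ : Subgroup (Coprod P (FreeGroup (Fin S.n)))), (⊤ : Subgroup _)⁆ ≤ (chi R P S i).ker := by
  rw [Subgroup.commutator_le]
  intro g₁ _ g₂ _
  rw [MonoidHom.mem_ker, map_commutatorElement, commutatorElement_eq_one_iff_commute]
  exact mul_comm _ _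

open scoped IsMulCommutative in
/-- Key algebraic lemma: an element of `N` lying in the commutator subgroup lies
in `⁅Q, N⁆`. -/
theorem mem_comm_of_mem_N {q : Coprod P (FreeGroup (Fin S.n))} (hqN : q ∈ NN R P S)
    (hqc : q ∈ ⁅(⊤ : Subgroup (Coprod P (FreeGroup (Fin S.n)))), (⊤ : Subgroup _)⁆) :
    q ∈ ⁅(⊤ : Subgroup (Coprod P (FreeGroup (Fin S.n)))), NN R P S⁆ := by
  set D := ⁅(⊤ : Subgroup (Coprod P (FreeGroup (Fin S.n)))), NN R P S⁆ with hDdef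
  haveI hDn : D.Normal := Subgroup.commutator_normal _ _
  have hx : (QuotientGroup.mk q : _ ⧸ D) ∈
      Subgroup.closure (QuotientGroup.mk '' Set.range (rel R P S)) :=
    mk_mem_closure_image _ hqN
  rw [← Set.range_comp] at hx
  -- the central generators
  have hcent : ∀ i : Fin S.n,
      (QuotientGroup.mk (rel R P S i) : _ ⧸ D) ∈ Subgroup.center _ := fun i =>
    quot_comm_central _ (Subgroup.subset_normalClosure (Set.mem_range_self i))
  set sbar : Fin S.n → ↥(Subgroup.center ((Coprod P (FreeGroup (Fin S.n))) ⧸ D)) :=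
    fun i => ⟨QuotientGroup.mk (rel R P S i), hcent i⟩ with hsbar
  have hrep : ∃ a : Fin S.n → ℤ,
      (QuotientGroup.mk q : _ ⧸ D) = ↑(∏ i, sbar i ^ a i) := by
    refine Subgroup.closure_induction
      (p := fun x _ => ∃ a : Fin S.n → ℤ, x = ↑(∏ i, sbar i ^ a i)) ?_ ?_ ?_ ?_ hx
    case _ =>
      rintro x ⟨i, rfl⟩
      refine ⟨fun j => if j = i then 1 else 0, ?_⟩
      show (QuotientGroup.mk (rel R P S i) : _ ⧸ D) = _
      have : (∏ j, sbar j ^ (if j = i then (1:ℤ) else 0)) = sbar i := by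
        rw [Finset.prod_eq_single i]
        · rw [if_pos rfl, zpow_one]
        · intro b _ hb
          rw [if_neg hb, zpow_zero]
        · intro hmem
          exact absurd (Finset.mem_univ i) hmem
      rw [this]
    case _ =>
      refine ⟨0, ?_⟩
      simp
    case _ =>
      rintro x y hxc hyc ⟨a, ha⟩ ⟨b, hb⟩
      refine ⟨a + b, ?_⟩
      rw [ha, hb, ← Subgroup.coe_mul, ← Finset.prod_mul_distrib]
      congr 1
      apply Finset.prod_congr rfl
      intro i _
      rw [Pi.add_apply, zpow_add]
    case _ =>
      rintro x hxc ⟨a, ha⟩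
      refine ⟨-a, ?_⟩
      rw [ha, ← Subgroup.coe_inv, ← Finset.prod_inv_distrib]
      congr 1
      apply Finset.prod_congr rfl
      intro i _
      rw [Pi.neg_apply, zpow_neg]
  obtain ⟨a, ha⟩ := hrep
  -- apply the characters to show all exponents vanish
  have hae : ∀ i, a i = 0 := by
    intro i
    have hkerD : D ≤ (chi R P S i).ker :=
      le_trans (Subgroup.commutator_mono le_top le_top) (comm_le_ker_chi R P S i)
    set chibar : (Coprod P (FreeGroup (Fin S.n)) ⧸ D) →* Multiplicative ℤ :=
      QuotientGroup.lift D (chi R P S i) hkerD with hchibar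
    have h1 : chibar (QuotientGroup.mk q) = 1 := by
      have : chi R P S i q = 1 := comm_le_ker_chi R P S i hqc
      simpa [hchibar] using this
    have h2 : chibar ↑(∏ j, sbar j ^ a j) = Multiplicative.ofAdd (a i * S.e) := by
      rw [show (↑(∏ j, sbar j ^ a j) : Coprod P (FreeGroup (Fin S.n)) ⧸ D)
            = (Subgroup.center _).subtype (∏ j, sbar j ^ a j) from rfl]
      rw [← MonoidHom.comp_apply, map_prod]
      have h3 : ∀ j, (chibar.comp (Subgroup.center _).subtype) (sbar j ^ a j)
          = Multiplicative.ofAdd (a j * (if j = i then (S.e:ℤ) else 0)) := by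
        intro j
        rw [map_zpow]
        have : (chibar.comp (Subgroup.center _).subtype) (sbar j)
            = Multiplicative.ofAdd (if j = i then (S.e:ℤ) else 0) := by
          simp only [MonoidHom.comp_apply, hsbar]
          rw [Subgroup.coe_subtype]
          show chibar (QuotientGroup.mk (rel R P S j)) = _
          simpa [hchibar] using chi_rel R P S i j
        rw [this, ← ofAdd_zsmul]
        norm_num
      rw [Finset.prod_congr rfl (fun j _ => h3 j)]
      rw [show (∏ j, Multiplicative.ofAdd (a j * (if j = i then (S.e:ℤ) else 0)))
          = Multiplicative.ofAdd (∑ j, a j * (if j = i then (S.e:ℤ) else 0)) from rfl]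
      congr 1
      rw [Finset.sum_eq_single i]
      · rw [if_pos rfl]
      · intro b _ hb
        rw [if_neg hb, mul_zero]
      · intro hmem
        exact absurd (Finset.mem_univ i) hmem
    rw [ha, h2] at h1
    have he0 : (S.e : ℤ) ≠ 0 := by
      have := pos_of_mem_DR R S.he
      exact_mod_cast this.ne'
    have h4 : a i * (S.e : ℤ) = 0 := by
      have h5 := congrArg Multiplicative.toAdd h1
      rwa [toAdd_ofAdd, toAdd_one] at h5
    exact (mul_eq_zero.mp h4).resolve_right he0
  have hq1 : (QuotientGroup.mk q : _ ⧸ D) = 1 := by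
    rw [ha]
    have : (∏ j, sbar j ^ a j) = 1 := by
      rw [Finset.prod_eq_one]
      intro j _
      rw [hae j, zpow_zero]
    rw [this, Subgroup.coe_one]
  rwa [QuotientGroup.eq_one_iff] at hq1

end AdjSol
/-! ### The `H₂` surjectivity -/

namespace AdjSol

open Monoid Subgroup

variable (R : Subring ℚ) (P : Type*) [Group P] (S : NullSys R P)

/-- The generators of the free group presenting `Q = P ∗ Fₙ`. -/
def gens : P ⊕ Fin S.n → Coprod P (FreeGroup (Fin S.n)) :=
  Sum.elim ⇑(Coprod.inl : P →* _) (fun i => Coprod.inr (FreeGroup.of i))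

/-- The presentation `F(P ⊕ Fin n) → Q`. -/
def pi3 : FreeGroup (P ⊕ Fin S.n) →* Coprod P (FreeGroup (Fin S.n)) :=
  FreeGroup.lift (gens R P S)

/-- The embedding `F(P) → F(P ⊕ Fin n)`. -/
def jmap : FreeGroup P →* FreeGroup (P ⊕ Fin (S.n)) := FreeGroup.map Sum.inl

/-- The retraction `F(P ⊕ Fin n) → F(P)`. -/
def rmap : FreeGroup (P ⊕ Fin S.n) →* FreeGroup P :=
  FreeGroup.lift (Sum.elim FreeGroup.of (fun _ => 1))

/-- The retraction `Q → P`. -/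
def rho : Coprod P (FreeGroup (Fin S.n)) →* P := Coprod.lift (MonoidHom.id P) 1

/-- The comparison map `F(P ⊕ Fin n) → F(G)`. -/
def dhat : FreeGroup (P ⊕ Fin S.n) →* FreeGroup (GG R P S) :=
  FreeGroup.map (fun x => mkN R P S (gens R P S x))

/-- The presentation `F(P ⊕ Fin n) → G`. -/
def pibar : FreeGroup (P ⊕ Fin S.n) →* GG R P S := (mkN R P S).comp (pi3 R P S)

lemma presHom_comp_dhat :
    (presHom (GG R P S)).comp (dhat R P S) = pibar R P S := by
  apply FreeGroup.ext_hom
  intro x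
  simp [dhat, pibar, pi3, presHom, FreeGroup.map.of]

lemma pi3_comp_jmap :
    (pi3 R P S).comp (jmap R P S) = (Coprod.inl : P →* _).comp (presHom P) := by
  apply FreeGroup.ext_hom
  intro a
  simp [pi3, jmap, presHom, gens, FreeGroup.map.of]

lemma presHom_comp_rmap :
    (presHom P).comp (rmap R P S) = (rho R P S).comp (pi3 R P S) := by
  apply FreeGroup.ext_hom
  rintro (a | i) <;> simp [pi3, rmap, presHom, gens, rho]

lemma rmap_comp_jmap : (rmap R P S).comp (jmap R P S) = MonoidHom.id _ := by
  apply FreeGroup.ext_hom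
  intro a
  simp [rmap, jmap, FreeGroup.map.of]

lemma dhat_comp_jmap :
    (dhat R P S).comp (jmap R P S) = FreeGroup.map ⇑(φS R P S) := by
  apply FreeGroup.ext_hom
  intro a
  simp [dhat, jmap, FreeGroup.map.of, φS, gens]

lemma pi3_surjective : Function.Surjective ⇑(pi3 R P S) := by
  intro q
  induction q using Coprod.induction_on with
  | inl p => exact ⟨FreeGroup.of (Sum.inl p), by simp [pi3, gens]⟩
  | inr x =>
    refine ⟨FreeGroup.map Sum.inr x, ?_⟩
    have h : (pi3 R P S).comp (FreeGroup.map Sum.inr) = (Coprod.inr : _ →* _) := by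
      apply FreeGroup.ext_hom
      intro i
      simp [pi3, gens, FreeGroup.map.of]
    exact DFunLike.congr_fun h x
  | mul x y hx hy =>
    obtain ⟨a, rfl⟩ := hx
    obtain ⟨b, rfl⟩ := hy
    exact ⟨a * b, map_mul _ _ _⟩

/-- The kernel of the free presentation of the free product is normally generated by
the relations of `P`. -/
lemma ker_pi3 :
    (pi3 R P S).ker
      = Subgroup.normalClosure (⇑(jmap R P S) '' (relSub P : Set (FreeGroup P))) := by
  set Scal : Set (FreeGroup (P ⊕ Fin S.n)) := ⇑(jmap R P S) '' (relSub P : Set (FreeGroup P))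
  have hle : Subgroup.normalClosure Scal ≤ (pi3 R P S).ker := by
    apply Subgroup.normalClosure_le_normal
    rintro _ ⟨x, hx, rfl⟩
    have : (pi3 R P S) (jmap R P S x) = Coprod.inl (presHom P x) :=
      DFunLike.congr_fun (pi3_comp_jmap R P S) x
    rw [SetLike.mem_coe, MonoidHom.mem_ker, this, show presHom P x = 1 from hx, map_one]
  refine le_antisymm ?_ hle
  -- construct the inverse homomorphism out of `Q`
  set E := FreeGroup (P ⊕ Fin S.n) ⧸ Subgroup.normalClosure Scal
  have hmem : ∀ x ∈ relSub P, (QuotientGroup.mk (jmap R P S x) : E) = 1 := by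
    intro x hx
    rw [QuotientGroup.eq_one_iff]
    exact Subgroup.subset_normalClosure ⟨x, hx, rfl⟩
  have hrel : ∀ a b : P,
      (QuotientGroup.mk (FreeGroup.of (Sum.inl (a * b))) : E)
        = QuotientGroup.mk (FreeGroup.of (Sum.inl a)) *
            QuotientGroup.mk (FreeGroup.of (Sum.inl b)) := by
    intro a b
    rw [← QuotientGroup.mk_mul, QuotientGroup.eq]
    have h2 : (FreeGroup.of (Sum.inl (a * b)))⁻¹ *
          (FreeGroup.of (Sum.inl a) * FreeGroup.of (Sum.inl b))
        = jmap R P S ((FreeGroup.of (a * b))⁻¹ * (FreeGroup.of a * FreeGroup.of b)) := by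
      simp [jmap, FreeGroup.map.of]
    rw [h2]
    apply Subgroup.subset_normalClosure
    refine ⟨_, ?_, rfl⟩
    show _ ∈ (presHom P).ker
    rw [MonoidHom.mem_ker]
    simp only [map_mul, map_inv, presHom, FreeGroup.lift_apply_of, id_eq]
    group
  let h₁ : P →* E :=
    { toFun := fun a => QuotientGroup.mk (FreeGroup.of (Sum.inl a))
      map_one' := by
        have h0 : (FreeGroup.of (1 : P)) ∈ relSub P := by
          show _ ∈ (presHom P).ker
          rw [MonoidHom.mem_ker]
          simp [presHom]
        show (QuotientGroup.mk (FreeGroup.of (Sum.inl (1:P))) : E) = 1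
        rw [show (FreeGroup.of (Sum.inl (1:P))) = jmap R P S (FreeGroup.of (1:P)) from by
          simp [jmap, FreeGroup.map.of]]
        exact hmem _ h0
      map_mul' := hrel }
  let h₂ : FreeGroup (Fin S.n) →* E :=
    FreeGroup.lift (fun i => (QuotientGroup.mk (FreeGroup.of (Sum.inr i)) : E))
  have hfac : (Coprod.lift h₁ h₂).comp (pi3 R P S)
      = QuotientGroup.mk' (Subgroup.normalClosure Scal) := by
    apply FreeGroup.ext_hom
    rintro (a | i)
    · simp only [MonoidHom.comp_apply, pi3, FreeGroup.lift_apply_of, gens, Sum.elim_inl,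
        Coprod.lift_apply_inl, QuotientGroup.mk'_apply]
      rfl
    · simp only [MonoidHom.comp_apply, pi3, FreeGroup.lift_apply_of, gens, Sum.elim_inr,
        Coprod.lift_apply_inr, QuotientGroup.mk'_apply, h₂]
      rfl
  intro x hx
  have h3 : QuotientGroup.mk' (Subgroup.normalClosure Scal) x = 1 := by
    rw [← hfac, MonoidHom.comp_apply, show pi3 R P S x = 1 from hx, map_one]
  rwa [← QuotientGroup.ker_mk' (Subgroup.normalClosure Scal), MonoidHom.mem_ker]

/-- Modulo `⁅⊤, ker π₃⁆`, every element of `ker π₃` comes from a relation of `P`. -/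
lemma ker_pi3_rep {u : FreeGroup (P ⊕ Fin S.n)} (hu : u ∈ (pi3 R P S).ker) :
    ∃ v₀ ∈ relSub P,
      u * (jmap R P S v₀)⁻¹ ∈ ⁅(⊤ : Subgroup (FreeGroup (P ⊕ Fin S.n))), (pi3 R P S).ker⁆ := by
  set Scal : Set (FreeGroup (P ⊕ Fin S.n)) := ⇑(jmap R P S) '' (relSub P : Set (FreeGroup P))
    with hScal
  have hker := ker_pi3 R P S
  rw [hker] at hu ⊢
  haveI : (Subgroup.normalClosure Scal).Normal := Subgroup.normalClosure_normal
  haveI : (⁅(⊤ : Subgroup (FreeGroup (P ⊕ Fin S.n))), Subgroup.normalClosure Scal⁆).Normal :=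
    Subgroup.commutator_normal _ _
  have hx := mk_mem_closure_image Scal hu
  have hrep : ∃ v₀ ∈ relSub P,
      (QuotientGroup.mk u :
          _ ⧸ ⁅(⊤ : Subgroup (FreeGroup (P ⊕ Fin S.n))), Subgroup.normalClosure Scal⁆)
        = QuotientGroup.mk (jmap R P S v₀) := by
    refine Subgroup.closure_induction
      (p := fun x _ => ∃ v₀ ∈ relSub P, x = QuotientGroup.mk (jmap R P S v₀)) ?_ ?_ ?_ ?_ hx
    · rintro _ ⟨_, ⟨v₀, hv₀, rfl⟩, rfl⟩
      exact ⟨v₀, hv₀, rfl⟩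
    · exact ⟨1, Subgroup.one_mem _, by rw [map_one, QuotientGroup.mk_one]⟩
    · rintro x y _ _ ⟨v₀, hv₀, rfl⟩ ⟨v₁, hv₁, rfl⟩
      exact ⟨v₀ * v₁, Subgroup.mul_mem _ hv₀ hv₁, by rw [map_mul, QuotientGroup.mk_mul]⟩
    · rintro x _ ⟨v₀, hv₀, rfl⟩
      exact ⟨v₀⁻¹, Subgroup.inv_mem _ hv₀, by rw [map_inv, QuotientGroup.mk_inv]⟩
  obtain ⟨v₀, hv₀, heq⟩ := hrep
  refine ⟨v₀, hv₀, ?_⟩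
  have h4 : u⁻¹ * jmap R P S v₀ ∈
      ⁅(⊤ : Subgroup (FreeGroup (P ⊕ Fin S.n))), Subgroup.normalClosure Scal⁆ :=
    QuotientGroup.eq.mp heq
  have h5 := (Subgroup.commutator_normal (⊤ : Subgroup (FreeGroup (P ⊕ Fin S.n)))
    (Subgroup.normalClosure Scal)).conj_mem _ (Subgroup.inv_mem _ h4) u
  have h6 : u * (u⁻¹ * jmap R P S v₀)⁻¹ * u⁻¹
      = u * ((jmap R P S v₀)⁻¹ * u) * u⁻¹ := by group
  rw [h6] at h5
  have h7 : u * ((jmap R P S v₀)⁻¹ * u) * u⁻¹ = u * (jmap R P S v₀)⁻¹ := by group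
  rwa [h7] at h5

end AdjSol
namespace AdjSol

open Monoid Subgroup

variable (R : Subring ℚ) (P : Type*) [Group P] (S : NullSys R P)

lemma pibar_surjective : Function.Surjective ⇑(pibar R P S) :=
  (QuotientGroup.mk'_surjective (NN R P S)).comp (pi3_surjective R P S)

theorem h2Zmap_surjective : Function.Surjective (H2Zmap (φS R P S)) := by
  intro ybar
  induction ybar using QuotientGroup.induction_on with
  | H y =>
  obtain ⟨hyker, hycomm⟩ := Subgroup.mem_inf.mp y.2
  have hy1 : presHom (GG R P S) ↑y = 1 := hyker
  -- the lift of the canonical presentation of G through F(P ⊕ Fin n)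
  have hsurj := pibar_surjective R P S
  set υ : FreeGroup (GG R P S) →* FreeGroup (P ⊕ Fin S.n) :=
    FreeGroup.lift (Function.surjInv hsurj) with hυ
  have hυcomp : (pibar R P S).comp υ = presHom (GG R P S) := by
    apply FreeGroup.ext_hom
    intro g
    simp only [MonoidHom.comp_apply, hυ, FreeGroup.lift_apply_of, presHom]
    rw [Function.surjInv_eq hsurj g]
    rfl
  set u := υ ↑y with hu
  have hu2 : u ∈ ⁅(⊤ : Subgroup (FreeGroup (P ⊕ Fin S.n))), (⊤ : Subgroup (FreeGroup (P ⊕ Fin S.n)))⁆ := by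
    have h1 := Subgroup.mem_map_of_mem υ hycomm
    rw [Subgroup.map_commutator] at h1
    exact Subgroup.commutator_mono le_top le_top h1
  have hu1 : pibar R P S u = 1 := by
    rw [hu, ← MonoidHom.comp_apply, hυcomp, hy1]
  -- the image in Q lies in [Q, N]
  have hq0N : pi3 R P S u ∈ NN R P S := by
    have : mkN R P S (pi3 R P S u) = 1 := hu1
    rwa [← QuotientGroup.ker_mk' (NN R P S), MonoidHom.mem_ker]
  have hq0c : pi3 R P S u ∈ ⁅(⊤ : Subgroup (Coprod P (FreeGroup (Fin S.n)))), (⊤ : Subgroup (Coprod P (FreeGroup (Fin S.n))))⁆ := by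
    have h1 := Subgroup.mem_map_of_mem (pi3 R P S) hu2
    rw [Subgroup.map_commutator] at h1
    exact Subgroup.commutator_mono le_top le_top h1
  have hq0 := mem_comm_of_mem_N R P S hq0N hq0c
  -- lift the correction term
  have hkerpibar : (pibar R P S).ker = Subgroup.comap (pi3 R P S) (NN R P S) := by
    ext x
    rw [MonoidHom.mem_ker, Subgroup.mem_comap]
    show (QuotientGroup.mk (pi3 R P S x) : GG R P S) = 1 ↔ _
    exact QuotientGroup.eq_one_iff _
  have hmapker : Subgroup.map (pi3 R P S) (pibar R P S).ker = NN R P S := by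
    rw [hkerpibar, Subgroup.map_comap_eq_self_of_surjective (pi3_surjective R P S)]
  have hq0' : pi3 R P S u ∈ Subgroup.map (pi3 R P S)
      ⁅(⊤ : Subgroup (FreeGroup (P ⊕ Fin S.n))), (pibar R P S).ker⁆ := by
    rw [Subgroup.map_commutator, Subgroup.map_top_of_surjective _ (pi3_surjective R P S),
      hmapker]
    exact hq0
  obtain ⟨w, hwmem, hweq⟩ := hq0'
  set u' := u * w⁻¹ with hu'
  have hu'ker : u' ∈ (pi3 R P S).ker := by
    rw [MonoidHom.mem_ker, hu', map_mul, map_inv, hweq, mul_inv_cancel]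
  have hu'c : u' ∈ ⁅(⊤ : Subgroup (FreeGroup (P ⊕ Fin S.n))), (⊤ : Subgroup (FreeGroup (P ⊕ Fin S.n)))⁆ := by
    refine Subgroup.mul_mem _ hu2 (Subgroup.inv_mem _ ?_)
    exact Subgroup.commutator_mono le_top le_top hwmem
  obtain ⟨v₀, hv₀, hd⟩ := ker_pi3_rep R P S hu'ker
  set d := u' * (jmap R P S v₀)⁻¹ with hdd
  have hu'eq : u' = d * jmap R P S v₀ := by rw [hdd]; group
  set v := rmap R P S u' with hv
  have hv1 : v ∈ relSub P := by
    show v ∈ (presHom P).ker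
    rw [MonoidHom.mem_ker, hv, ← MonoidHom.comp_apply, presHom_comp_rmap,
      MonoidHom.comp_apply, show pi3 R P S u' = 1 from hu'ker, map_one]
  have hv2 : v ∈ ⁅(⊤ : Subgroup (FreeGroup P)), (⊤ : Subgroup (FreeGroup P))⁆ := by
    have h1 := Subgroup.mem_map_of_mem (rmap R P S) hu'c
    rw [Subgroup.map_commutator] at h1
    exact Subgroup.commutator_mono le_top le_top h1
  have hvtop : v ∈ hopfTop P := Subgroup.mem_inf.mpr ⟨hv1, hv2⟩
  -- v = rmap d * v₀
  have hveq : v = rmap R P S d * v₀ := by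
    rw [hv, hu'eq, map_mul]
    congr 1
    exact DFunLike.congr_fun (rmap_comp_jmap R P S) v₀
  have hrd : rmap R P S d ∈ hopfBot P := by
    have h1 := Subgroup.mem_map_of_mem (rmap R P S) hd
    rw [Subgroup.map_commutator] at h1
    refine Subgroup.commutator_mono le_top ?_ h1
    rintro _ ⟨x, hx, rfl⟩
    show presHom P (rmap R P S x) = 1
    rw [← MonoidHom.comp_apply, presHom_comp_rmap, MonoidHom.comp_apply,
      show pi3 R P S x = 1 from hx, map_one]
  -- now compare in F(G) modulo hopfBot G
  have hKh : ∀ x ∈ (pibar R P S).ker, dhat R P S x ∈ relSub (GG R P S) := by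
    intro x hx
    show presHom (GG R P S) (dhat R P S x) = 1
    rw [← MonoidHom.comp_apply, presHom_comp_dhat]
    exact hx
  have hBdhat : ∀ x ∈ ⁅(⊤ : Subgroup (FreeGroup (P ⊕ Fin S.n))), (pibar R P S).ker⁆,
      dhat R P S x ∈ hopfBot (GG R P S) := by
    intro x hx
    have h1 := Subgroup.mem_map_of_mem (dhat R P S) hx
    rw [Subgroup.map_commutator] at h1
    refine Subgroup.commutator_mono le_top ?_ h1
    rintro _ ⟨x', hx', rfl⟩
    exact hKh x' hx'
  have hkerle : (pi3 R P S).ker ≤ (pibar R P S).ker := by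
    intro x hx
    rw [MonoidHom.mem_ker, pibar, MonoidHom.comp_apply, show pi3 R P S x = 1 from hx, map_one]
  -- (1) y ≡ dhat u
  have h1 : dhat R P S u * (↑y)⁻¹ ∈ hopfBot (GG R P S) := by
    have hcomp : (presHom (GG R P S)).comp ((dhat R P S).comp υ)
        = (presHom (GG R P S)).comp (MonoidHom.id _) := by
      rw [← MonoidHom.comp_assoc, presHom_comp_dhat, hυcomp, MonoidHom.comp_id]
    exact hopf_congr (presHom (GG R P S)) ((dhat R P S).comp υ) (MonoidHom.id _)
      hcomp hycomm
  -- (2) dhat w ∈ B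
  have h2 : dhat R P S w ∈ hopfBot (GG R P S) :=
    hBdhat w hwmem
  -- (3) dhat d ∈ B
  have h3 : dhat R P S d ∈ hopfBot (GG R P S) :=
    hBdhat d (Subgroup.commutator_mono le_top hkerle hd)
  -- (4) dhat (jmap (rmap d)) ∈ B
  have h4 : FreeGroup.map ⇑(φS R P S) (rmap R P S d) ∈ hopfBot (GG R P S) :=
    map_mem_hopfBot (φS R P S) hrd
  -- conclude the congruence
  have hmapv : FreeGroup.map ⇑(φS R P S) v = dhat R P S (jmap R P S v) := by
    rw [← dhat_comp_jmap]; rfl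
  have key : (FreeGroup.map ⇑(φS R P S) v)⁻¹ * ↑y ∈ hopfBot (GG R P S) := by
    haveI : (hopfBot (GG R P S)).Normal := hopfBot_normal _
    have e0 : (QuotientGroup.mk (FreeGroup.map ⇑(φS R P S) v) :
        FreeGroup (GG R P S) ⧸ hopfBot (GG R P S))
          = QuotientGroup.mk (dhat R P S (jmap R P S v₀)) := by
      rw [hveq, map_mul, QuotientGroup.mk_mul, (QuotientGroup.eq_one_iff _).mpr h4, one_mul,
        show FreeGroup.map ⇑(φS R P S) v₀ = dhat R P S (jmap R P S v₀) from
          (DFunLike.congr_fun (dhat_comp_jmap R P S) v₀).symm]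
    have e1 : (QuotientGroup.mk (dhat R P S u) :
        FreeGroup (GG R P S) ⧸ hopfBot (GG R P S)) = QuotientGroup.mk ↑y := by
      have h5 : (QuotientGroup.mk (dhat R P S u * (↑y)⁻¹) :
          FreeGroup (GG R P S) ⧸ hopfBot (GG R P S)) = 1 := (QuotientGroup.eq_one_iff _).mpr h1
      rw [QuotientGroup.mk_mul, QuotientGroup.mk_inv] at h5
      exact mul_inv_eq_one.mp h5
    have e2 : (QuotientGroup.mk (dhat R P S u) :
        FreeGroup (GG R P S) ⧸ hopfBot (GG R P S))
          = QuotientGroup.mk (dhat R P S (jmap R P S v₀)) := by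
      have hueq : u = d * jmap R P S v₀ * w := by rw [← hu'eq, hu']; group
      rw [hueq, map_mul, map_mul, QuotientGroup.mk_mul, QuotientGroup.mk_mul,
        (QuotientGroup.eq_one_iff _).mpr h3, (QuotientGroup.eq_one_iff _).mpr h2,
        one_mul, mul_one]
    exact QuotientGroup.eq.mp (e0.trans (e2.symm.trans e1))
  -- package into the Hopf quotient
  refine ⟨QuotientGroup.mk ⟨v, hvtop⟩, ?_⟩
  show QuotientGroup.map _ _ _ _ _ = _
  rw [QuotientGroup.map_mk]
  rw [QuotientGroup.eq]
  rw [Subgroup.mem_subgroupOf]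
  exact key

end AdjSol
/-! ### The `H₁` bijectivity -/

set_option synthInstance.maxHeartbeats 1000000
set_option maxHeartbeats 1600000

namespace AdjSol

open Monoid Subgroup TensorProduct

variable (R : Subring ℚ) (P : Type*) [Group P] (S : NullSys R P)

/-- The element `1/e ∈ R`. -/
def rinv : ↥R := ⟨1 / (S.e : ℚ), one_div_mem_of_mem_DR R S.he⟩

lemma e_mul_rinv : ((S.e : ℤ) : ↥R) * rinv R P S = 1 := by
  apply Subtype.ext
  have he : (S.e : ℚ) ≠ 0 := by
    have := pos_of_mem_DR R S.he
    exact_mod_cast this.ne'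
  push_cast [rinv]
  field_simp

/-- The projection `Q → Abelianization P` (killing the free factor). -/
def kap : Coprod P (FreeGroup (Fin S.n)) →* Abelianization P :=
  Coprod.lift (Abelianization.of) 1

/-- `a ↦ a ⊗ 1` as a homomorphism into the multiplicative tensor product. -/
noncomputable def tmulone {A : Type*} [CommGroup A] :
    A →* Multiplicative (Additive A ⊗[ℤ] ↥R) :=
  { toFun := fun a => Multiplicative.ofAdd (Additive.ofMul a ⊗ₜ[ℤ] (1 : ↥R))
    map_one' := by
      show Multiplicative.ofAdd (Additive.ofMul (1 : A) ⊗ₜ[ℤ] (1 : ↥R)) = 1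
      rw [ofMul_one, TensorProduct.zero_tmul, ofAdd_zero]
    map_mul' := by
      intro a b
      show Multiplicative.ofAdd (Additive.ofMul (a * b) ⊗ₜ[ℤ] (1 : ↥R))
        = Multiplicative.ofAdd (Additive.ofMul a ⊗ₜ[ℤ] (1 : ↥R))
          * Multiplicative.ofAdd (Additive.ofMul b ⊗ₜ[ℤ] (1 : ↥R))
      rw [ofMul_mul, TensorProduct.add_tmul, ofAdd_add] }

/-- The homomorphism `θ : Q → H₁(P;R)` (multiplicatively), sending `zᵢ ↦ c(wᵢ) ⊗ 1/e`. -/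
noncomputable def theta : Coprod P (FreeGroup (Fin S.n)) →* Multiplicative (H1R R P) :=
  Coprod.lift ((tmulone R).comp Abelianization.of)
    (FreeGroup.lift (fun i =>
      Multiplicative.ofAdd (Additive.ofMul (kap R P S (S.w i)) ⊗ₜ[ℤ] rinv R P S)))

lemma lift_tmulone :
    Abelianization.lift ((tmulone R (A := Abelianization P)).comp Abelianization.of)
      = tmulone R := by
  apply Abelianization.hom_ext
  ext p
  rw [MonoidHom.comp_apply, Abelianization.lift_apply_of]

lemma theta_w (i : Fin S.n) :
    theta R P S (S.w i)
      = Multiplicative.ofAdd (Additive.ofMul (kap R P S (S.w i)) ⊗ₜ[ℤ] (1 : ↥R)) := by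
  rw [theta, coprod_lift_mul]
  rw [MonoidHom.mul_apply]
  have h2 : (Coprod.lift 1 (FreeGroup.lift (fun i =>
      Multiplicative.ofAdd (Additive.ofMul (kap R P S (S.w i)) ⊗ₜ[ℤ] rinv R P S)))) (S.w i)
      = 1 := by
    rw [← coprod_lift_one_left, MonoidHom.comp_apply, S.nullh i, map_one]
  have h1 : (Coprod.lift ((tmulone R).comp Abelianization.of) 1) (S.w i)
      = tmulone R (kap R P S (S.w i)) := by
    rw [← coprod_lift_one_right, MonoidHom.comp_apply, ← lift_tmulone R P]
    rfl
  rw [h1, h2, mul_one]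
  rfl

lemma theta_z (i : Fin S.n) :
    theta R P S (Coprod.inr (FreeGroup.of i))
      = Multiplicative.ofAdd (Additive.ofMul (kap R P S (S.w i)) ⊗ₜ[ℤ] rinv R P S) := by
  rw [theta, Coprod.lift_apply_inr, FreeGroup.lift_apply_of]

lemma theta_rel (i : Fin S.n) : theta R P S (rel R P S i) = 1 := by
  rw [rel, map_mul, map_inv, map_pow, theta_z, theta_w]
  have h1 : (Multiplicative.ofAdd (Additive.ofMul (kap R P S (S.w i)) ⊗ₜ[ℤ] rinv R P S)) ^ S.e
      = Multiplicative.ofAdd (Additive.ofMul (kap R P S (S.w i)) ⊗ₜ[ℤ] (1 : ↥R)) := by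
    rw [← ofAdd_nsmul]
    congr 1
    rw [← Nat.cast_smul_eq_nsmul ℤ]
    rw [← TensorProduct.tmul_smul]
    congr 1
    rw [zsmul_eq_mul]
    exact e_mul_rinv R P S
  rw [h1, mul_inv_cancel]

lemma NN_le_ker_theta : NN R P S ≤ (theta R P S).ker := by
  apply Subgroup.normalClosure_le_normal
  rintro _ ⟨i, rfl⟩
  rw [SetLike.mem_coe, MonoidHom.mem_ker]
  exact theta_rel R P S i

/-- `θ` descended to `G`. -/
noncomputable def thetabar : GG R P S →* Multiplicative (H1R R P) :=
  QuotientGroup.lift (NN R P S) (theta R P S) (NN_le_ker_theta R P S)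

lemma thetabar_mk (q : Coprod P (FreeGroup (Fin S.n))) :
    thetabar R P S (mkN R P S q) = theta R P S q := rfl

/-- Right multiplication by `r ∈ R` on a tensor product. -/
noncomputable def scal {A : Type*} [AddCommGroup A] (r : ↥R) : (A ⊗[ℤ] ↥R) →ₗ[ℤ] (A ⊗[ℤ] ↥R) :=
  TensorProduct.map LinearMap.id ((LinearMap.mul ℤ ↥R) r)

lemma scal_tmul {A : Type*} [AddCommGroup A] (r : ↥R) (a : A) (b : ↥R) :
    scal R r (a ⊗ₜ[ℤ] b) = a ⊗ₜ[ℤ] (r * b) := by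
  rw [scal]
  exact TensorProduct.map_tmul _ _ _ _

/-- The backwards map on `H₁`-level, as a bilinear map. -/
noncomputable def Bmap : Additive (Abelianization (GG R P S)) →ₗ[ℤ] ↥R →ₗ[ℤ] H1R R P :=
  letI fhat : Additive (Abelianization (GG R P S)) →+ H1R R P :=
    MonoidHom.toAdditiveLeft (Abelianization.lift (thetabar R P S))
  { toFun := fun a =>
      { toFun := fun r => scal R r (fhat a)
        map_add' := by
          intro r r'
          simp only [scal]
          rw [map_add, TensorProduct.map_add_right]
          rfl
        map_smul' := by
          intro z r
          simp only [scal]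
          rw [map_smul, TensorProduct.map_smul_right]
          rfl }
    map_add' := by
      intro a b
      apply LinearMap.ext
      intro r
      simp only [LinearMap.coe_mk, AddHom.coe_mk, LinearMap.add_apply]
      rw [map_add, map_add]
    map_smul' := by
      intro z a
      apply LinearMap.ext
      intro r
      simp only [LinearMap.coe_mk, AddHom.coe_mk, RingHom.id_apply, LinearMap.smul_apply]
      rw [AddMonoidHom.map_zsmul, map_smul] }

/-- The backwards map on `H₁(G;R)`. -/
noncomputable def beta : H1R R (GG R P S) →ₗ[ℤ] H1R R P :=
  TensorProduct.lift (Bmap R P S)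

lemma beta_tmul (g : GG R P S) (r : ↥R) :
    beta R P S (Additive.ofMul (Abelianization.of g) ⊗ₜ[ℤ] r)
      = scal R r (Multiplicative.toAdd (Abelianization.lift (thetabar R P S)
          (Abelianization.of g))) := rfl

lemma alpha_tmul {G' H' : Type*} [Group G'] [Group H'] (ψ : G' →* H') (a : Additive (Abelianization G')) (r : ↥R) :
    H1Rmap R ψ (a ⊗ₜ[ℤ] r)
      = Additive.ofMul (Abelianization.map ψ (Additive.toMul a)) ⊗ₜ[ℤ] r := by
  rw [H1Rmap]
  exact TensorProduct.map_tmul _ _ _ _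

/-- Key identity: the image of the `P`-part of `wᵢ` in `Abelianization G` is the `e`-th
power of the class of `zᵢ`. -/
lemma abmap_kap (i : Fin S.n) :
    Abelianization.map (φS R P S) (kap R P S (S.w i))
      = (Abelianization.of (mkN R P S (Coprod.inr (FreeGroup.of i)))) ^ S.e := by
  set h₁ : Coprod P (FreeGroup (Fin S.n)) →* Abelianization (GG R P S) :=
    (Abelianization.of).comp (mkN R P S) with hh₁
  have hdec : h₁ = Coprod.lift (h₁.comp Coprod.inl) (h₁.comp Coprod.inr) := by
    apply Coprod.hom_ext
    · rw [Coprod.lift_comp_inl]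
    · rw [Coprod.lift_comp_inr]
  have hw : h₁ (S.w i) = Abelianization.map (φS R P S) (kap R P S (S.w i)) := by
    rw [hdec, coprod_lift_mul, MonoidHom.mul_apply]
    have h2 : (Coprod.lift 1 (h₁.comp Coprod.inr)) (S.w i) = 1 := by
      rw [← coprod_lift_one_left, MonoidHom.comp_apply, S.nullh i, map_one]
    have h1 : (Coprod.lift (h₁.comp Coprod.inl) 1) (S.w i)
        = (Abelianization.lift (h₁.comp Coprod.inl)) (kap R P S (S.w i)) := by
      rw [← coprod_lift_one_right]
      rfl
    rw [h1, h2, mul_one]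
    have h3 : Abelianization.lift (h₁.comp Coprod.inl) = Abelianization.map (φS R P S) := by
      apply Abelianization.hom_ext
      ext p
      rw [MonoidHom.comp_apply, Abelianization.lift_apply_of]
      rfl
    rw [h3]
  have hrel : mkN R P S (S.w i) = mkN R P S ((Coprod.inr (FreeGroup.of i)) ^ S.e) := by
    have hmem : rel R P S i ∈ NN R P S :=
      Subgroup.subset_normalClosure (Set.mem_range_self i)
    have h4 : mkN R P S (rel R P S i) = 1 := by
      rw [← QuotientGroup.ker_mk' (NN R P S), MonoidHom.mem_ker] at hmem
      exact hmem
    rw [rel, map_mul, map_inv] at h4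
    rw [eq_comm]
    exact (mul_inv_eq_one.mp h4)
  have h5 : h₁ (S.w i) = (Abelianization.of (mkN R P S (Coprod.inr (FreeGroup.of i)))) ^ S.e := by
    rw [hh₁, MonoidHom.comp_apply, hrel, map_pow]
    rfl
  rw [← hw, h5]

/-- The key evaluation: `α ∘ scal r ∘ θ` computes the class of `q` tensored with `r`. -/
lemma key_eval (q : Coprod P (FreeGroup (Fin S.n))) (r : ↥R) :
    H1Rmap R (φS R P S) (scal R r (Multiplicative.toAdd (theta R P S q)))
      = Additive.ofMul (Abelianization.of (mkN R P S q)) ⊗ₜ[ℤ] r := by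
  induction q using Coprod.induction_on with
  | inl p =>
    have h1 : theta R P S (Coprod.inl p)
        = Multiplicative.ofAdd (Additive.ofMul (Abelianization.of p) ⊗ₜ[ℤ] (1 : ↥R)) := by
      rw [theta, Coprod.lift_apply_inl]
      rfl
    rw [h1, toAdd_ofAdd, scal_tmul, mul_one, alpha_tmul]
    rfl
  | inr x =>
    induction x using FreeGroup.induction_on with
    | C1 =>
      have h1 : theta R P S (Coprod.inr 1) = 1 := by rw [map_one, map_one]
      have h2 : mkN R P S (Coprod.inr (1 : FreeGroup (Fin S.n))) = 1 := by
        rw [map_one, map_one]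
      rw [h1, toAdd_one, map_zero, map_zero, h2,
        show (Abelianization.of (1 : GG R P S)) = 1 from map_one _, ofMul_one,
        TensorProduct.zero_tmul]
    | of i =>
      rw [theta_z, toAdd_ofAdd, scal_tmul, alpha_tmul]
      rw [toMul_ofMul, abmap_kap]
      have h6 : Additive.ofMul
            ((Abelianization.of (mkN R P S (Coprod.inr (FreeGroup.of i)))) ^ S.e)
          = (S.e : ℤ) • Additive.ofMul
              (Abelianization.of (mkN R P S (Coprod.inr (FreeGroup.of i)))) := by
        rw [ofMul_pow, Nat.cast_smul_eq_nsmul]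
      rw [h6, TensorProduct.smul_tmul]
      congr 1
      rw [zsmul_eq_mul, ← mul_assoc, mul_right_comm, e_mul_rinv, one_mul]
    | inv_of i ih =>
      have h1 : theta R P S (Coprod.inr (FreeGroup.of i)⁻¹)
          = (theta R P S (Coprod.inr (FreeGroup.of i)))⁻¹ := by rw [map_inv, map_inv]
      have h2 : mkN R P S (Coprod.inr (FreeGroup.of i)⁻¹)
          = (mkN R P S (Coprod.inr (FreeGroup.of i)))⁻¹ := by rw [map_inv, map_inv]
      rw [h1, toAdd_inv, map_neg, map_neg, ih, h2,
        show Abelianization.of ((mkN R P S (Coprod.inr (FreeGroup.of i)))⁻¹)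
          = (Abelianization.of (mkN R P S (Coprod.inr (FreeGroup.of i))))⁻¹ from map_inv _ _,
        ofMul_inv, TensorProduct.neg_tmul]
    | mul x y ihx ihy =>
      have h1 : theta R P S (Coprod.inr (x * y))
          = theta R P S (Coprod.inr x) * theta R P S (Coprod.inr y) := by
        rw [map_mul, map_mul]
      have h2 : mkN R P S (Coprod.inr (x * y))
          = mkN R P S (Coprod.inr x) * mkN R P S (Coprod.inr y) := by
        rw [map_mul, map_mul]
      rw [h1, toAdd_mul, map_add, map_add, ihx, ihy, h2,
        show Abelianization.of (mkN R P S (Coprod.inr x) * mkN R P S (Coprod.inr y))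
          = Abelianization.of (mkN R P S (Coprod.inr x))
            * Abelianization.of (mkN R P S (Coprod.inr y)) from map_mul _ _ _,
        ofMul_mul, TensorProduct.add_tmul]
  | mul x y ihx ihy =>
    have h1 : theta R P S (x * y) = theta R P S x * theta R P S y := map_mul _ _ _
    have h2 : mkN R P S (x * y) = mkN R P S x * mkN R P S y := map_mul _ _ _
    rw [h1, toAdd_mul, map_add, map_add, ihx, ihy, h2,
      show Abelianization.of (mkN R P S x * mkN R P S y)
        = Abelianization.of (mkN R P S x) * Abelianization.of (mkN R P S y) from map_mul _ _ _,
      ofMul_mul, TensorProduct.add_tmul]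

end AdjSol
namespace AdjSol

open Monoid Subgroup TensorProduct

variable (R : Subring ℚ) (P : Type*) [Group P] (S : NullSys R P)

lemma beta_alpha : (beta R P S).comp (H1Rmap R (φS R P S)) = LinearMap.id := by
  apply TensorProduct.ext'
  intro a r
  have hrep : ∀ x : Abelianization P, ∃ p : P, Abelianization.of p = x := fun x =>
    QuotientGroup.induction_on x fun z => ⟨z, rfl⟩
  obtain ⟨p, hp⟩ := hrep (Additive.toMul a)
  have ha : a = Additive.ofMul (Abelianization.of p) := by rw [hp, ofMul_toMul]
  show beta R P S (H1Rmap R (φS R P S) (a ⊗ₜ[ℤ] r)) = a ⊗ₜ[ℤ] r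
  rw [ha, alpha_tmul]
  rw [toMul_ofMul]
  have h1 : Abelianization.map (φS R P S) (Abelianization.of p)
      = Abelianization.of (φS R P S p) := by
    rw [Abelianization.map_of]
  rw [h1, beta_tmul, Abelianization.lift_apply_of]
  have h2 : thetabar R P S (φS R P S p) = theta R P S (Coprod.inl p) := rfl
  rw [h2]
  have h3 : theta R P S (Coprod.inl p)
      = Multiplicative.ofAdd (Additive.ofMul (Abelianization.of p) ⊗ₜ[ℤ] (1 : ↥R)) := by
    rw [theta, Coprod.lift_apply_inl]
    rfl
  rw [h3, toAdd_ofAdd, scal_tmul, mul_one]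

lemma alpha_beta : (H1Rmap R (φS R P S)).comp (beta R P S) = LinearMap.id := by
  apply TensorProduct.ext'
  intro a r
  have hrep : ∀ x : Abelianization (GG R P S), ∃ g, Abelianization.of g = x := fun x =>
    QuotientGroup.induction_on x fun z => ⟨z, rfl⟩
  obtain ⟨g, hg⟩ := hrep (Additive.toMul a)
  obtain ⟨q, rfl⟩ := QuotientGroup.mk'_surjective (NN R P S) g
  have ha : a = Additive.ofMul (Abelianization.of (QuotientGroup.mk' (NN R P S) q)) := by
    rw [hg, ofMul_toMul]
  show H1Rmap R (φS R P S) (beta R P S (a ⊗ₜ[ℤ] r)) = a ⊗ₜ[ℤ] r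
  rw [ha, beta_tmul, Abelianization.lift_apply_of]
  have h2 : thetabar R P S (QuotientGroup.mk' (NN R P S) q) = theta R P S q := rfl
  rw [h2]
  exact key_eval R P S q r

theorem h1_bijective : Function.Bijective ⇑(H1Rmap R (φS R P S)) := by
  constructor
  · intro x y hxy
    have hx := DFunLike.congr_fun (beta_alpha R P S) x
    have hy := DFunLike.congr_fun (beta_alpha R P S) y
    rw [LinearMap.comp_apply, LinearMap.id_apply] at hx hy
    rw [← hx, ← hy, hxy]
  · intro z
    refine ⟨beta R P S z, ?_⟩
    have h := DFunLike.congr_fun (alpha_beta R P S) z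
    rwa [LinearMap.comp_apply, LinearMap.id_apply] at h

theorem h2R_surjective : Function.Surjective ⇑(H2Rmap R (φS R P S)) := by
  apply TensorProduct.map_surjective
  · intro b
    obtain ⟨a, ha⟩ := h2Zmap_surjective R P S (Additive.toMul b)
    exact ⟨Additive.ofMul a, congrArg Additive.ofMul ha⟩
  · intro x
    exact ⟨x, rfl⟩

theorem main : TwoConnected R (φS R P S) :=
  ⟨h1_bijective R P S, h2R_surjective R P S⟩

end AdjSol
/-- Adjoining to `π` the solutions of an `R`-nullhomologous system (new generators `zᵢ` and
relations `zᵢ^e = wᵢ(z)`) yields a group `G` such that the canonical homomorphism `π → G`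
induces an isomorphism on `H₁(-;R)` and a surjection on `H₂(-;R)`. -/
theorem adjoining_solutions_twoConnected (R : Subring ℚ) (P : Type*) [Group P]
    (S : NullSys R P) :
    TwoConnected R
      ((QuotientGroup.mk' (Subgroup.normalClosure
          (Set.range fun i =>
            (Monoid.Coprod.inr (FreeGroup.of i) : Monoid.Coprod P (FreeGroup (Fin S.n))) ^ S.e
              * (S.w i)⁻¹))).comp
        (Monoid.Coprod.inl : P →* Monoid.Coprod P (FreeGroup (Fin S.n)))) := by
  exact AdjSol.main R P S
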